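/- Classical Plug-In Lemma: Let (y_1,...,y_t) be jointly distributed classical random variables and let s be a random variable over at most 2^ℓ values depending arbitrarily on them. Let j be uniform over [t], and let y' be drawn from the conditional distribution of y_j given (y_1,...,y_{j-1}) but independently of s given this prefix. Then the total variation distance between the distributions of (j, y_1,...,y_{j-1}, y_j, s) and (j, y_1,...,y_{j-1}, y', s) is at most sqrt(ℓ/(2t)). -/

import Mathlib

open Finset

namespace Stmt3

/-- Shannon entropy (in bits) of a probability mass function on a finite type. -/
noncomputable def H2 {α : Type*} [Fintype α] (p : α → ℝ) : ℝ :=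
  -∑ a, p a * Real.logb 2 (p a)

variable {S Y : Type*} [Fintype S] [Fintype Y] [DecidableEq Y]

/-- Marginal distribution of `(s, y_1, …, y_j)` for a joint pmf on `s` and `(y_1,…,y_t)`. -/
noncomputable def margSPre {t : ℕ} (p : S × (Fin t → Y) → ℝ) (j : ℕ) (h : j ≤ t) :
    S × (Fin j → Y) → ℝ :=
  fun av => ∑ w : Fin t → Y,
    if ∀ i : Fin j, w (Fin.castLE h i) = av.2 i then p (av.1, w) else 0

/-- Marginal distribution of the prefix `(y_1, …, y_j)`. -/
noncomputable def margPre {t : ℕ} (p : S × (Fin t → Y) → ℝ) (j : ℕ) (h : j ≤ t) :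
    (Fin j → Y) → ℝ :=
  fun v => ∑ a : S, margSPre p j h (a, v)

/-- Marginal distribution of `s`. -/
noncomputable def margS {t : ℕ} (p : S × (Fin t → Y) → ℝ) : S → ℝ :=
  fun a => ∑ w, p (a, w)

/-- Total variation (statistical) distance between two mass functions. -/
noncomputable def tv {α : Type*} [Fintype α] (p q : α → ℝ) : ℝ :=
  (∑ a, |p a - q a|) / 2

variable [DecidableEq S]

/-- The joint distribution of `(j, y_1,…,y_{j-1}, y_j, s)` where `j ← [t]` is uniform:
the "real" side of the Plug-In Lemma. -/
noncomputable def realDist {t : ℕ} (p : S × (Fin t → Y) → ℝ) :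
    (Σ j : Fin t, (Fin (j.1 + 1) → Y) × S) → ℝ :=
  fun x => (1 / (t : ℝ)) * margSPre p (x.1.1 + 1) x.1.isLt (x.2.2, x.2.1)

/-- The joint distribution of `(j, y_1,…,y_{j-1}, y', s)` where `j ← [t]` is uniform and
`y'` is a fresh sample from the conditional law of `y_j` given the prefix `y_1,…,y_{j-1}`,
conditionally independent of `s`: the "ideal" side of the Plug-In Lemma. -/
noncomputable def idealDist {t : ℕ} (p : S × (Fin t → Y) → ℝ) :
    (Σ j : Fin t, (Fin (j.1 + 1) → Y) × S) → ℝ :=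
  fun x =>
    (1 / (t : ℝ)) *
      (margSPre p x.1.1 (Nat.le_of_succ_le x.1.isLt)
          (x.2.2, fun i => x.2.1 (Fin.castSucc i)) *
        (margPre p (x.1.1 + 1) x.1.isLt x.2.1 /
          margPre p x.1.1 (Nat.le_of_succ_le x.1.isLt) (fun i => x.2.1 (Fin.castSucc i))))



noncomputable def Gfun : ℝ → ℝ := fun r => Real.log r - 3*(r-1)*(r+5)/(2*(r+2)^2)
noncomputable def Ffun : ℝ → ℝ := fun r => r * Real.log r - r + 1 - 3*(r-1)^2/(2*(r+2))

lemma hasDerivAt_G {x : ℝ} (hx : 0 < x) :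
    HasDerivAt Gfun (1/x - 27/(x+2)^3) x := by
  have hne : (2*(x+2)^2) ≠ 0 := by positivity
  have h1 : HasDerivAt (fun r : ℝ => 3*(r-1)*(r+5)) (3*(x+5) + 3*(x-1)) x := by
    have : HasDerivAt (fun r : ℝ => 3*(r-1)) 3 x := by
      simpa using (((hasDerivAt_id x).sub_const 1).const_mul 3)
    exact (this.mul ((hasDerivAt_id' x).add_const 5)).congr_deriv (by ring)
  have h2 : HasDerivAt (fun r : ℝ => 2*(r+2)^2) (2*(2*(x+2))) x := by
    have : HasDerivAt (fun r : ℝ => (r+2)^2) (2*(x+2)) x := by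
      exact (((hasDerivAt_id' x).add_const 2).pow 2).congr_deriv (by norm_num)
    simpa using this.const_mul 2
  have hdiv := (h1.div h2 hne)
  have hlog := Real.hasDerivAt_log hx.ne'
  have := hlog.sub hdiv
  refine this.congr_deriv ?_
  have hx2 : (x:ℝ) + 2 ≠ 0 := by positivity
  field_simp
  ring

lemma hasDerivAt_F {x : ℝ} (hx : 0 < x) :
    HasDerivAt Ffun (Gfun x) x := by
  have hne : (2*(x+2)) ≠ 0 := by positivity
  have h1 : HasDerivAt (fun r : ℝ => 3*(r-1)^2) (3*(2*(x-1))) x := by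
    simpa using (((hasDerivAt_id x).sub_const 1).pow 2).const_mul 3
  have h2 : HasDerivAt (fun r : ℝ => 2*(r+2)) 2 x := by
    simpa using ((hasDerivAt_id x).add_const 2).const_mul 2
  have hdiv := h1.div h2 hne
  have hmul : HasDerivAt (fun r : ℝ => r * Real.log r) (Real.log x + 1) x := by
    have := (hasDerivAt_id x).mul (Real.hasDerivAt_log hx.ne')
    refine this.congr_deriv ?_
    simp [hx.ne']
  have := ((hmul.sub (hasDerivAt_id x)).add_const 1).sub hdiv
  refine this.congr_deriv ?_
  unfold Gfun
  have hx2 : (x:ℝ) + 2 ≠ 0 := by positivity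
  field_simp
  ring

lemma G_nonneg {r : ℝ} (hr : 1 ≤ r) : 0 ≤ Gfun r := by
  have hmono : MonotoneOn Gfun (Set.Ici 1) := by
    apply monotoneOn_of_deriv_nonneg (convex_Ici 1)
    · intro x hx
      exact (hasDerivAt_G (lt_of_lt_of_le one_pos hx)).continuousAt.continuousWithinAt
    · intro x hx
      rw [interior_Ici] at hx
      exact (hasDerivAt_G (lt_trans one_pos hx)).differentiableAt.differentiableWithinAt
    · intro x hx
      rw [interior_Ici] at hx
      have hx0 : (0:ℝ) < x := lt_trans one_pos hx
      rw [(hasDerivAt_G hx0).deriv]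
      rw [sub_nonneg, div_le_div_iff₀ (by positivity) (by positivity)]
      nlinarith [sq_nonneg (x-1), hx0.le]
  have h1 : Gfun 1 = 0 := by norm_num [Gfun]
  have := hmono (Set.mem_Ici.2 le_rfl) (Set.mem_Ici.2 hr) hr
  linarith [this]

lemma G_nonpos {r : ℝ} (hr0 : 0 < r) (hr : r ≤ 1) : Gfun r ≤ 0 := by
  have hmono : MonotoneOn Gfun (Set.Icc r 1) := by
    apply monotoneOn_of_deriv_nonneg (convex_Icc r 1)
    · intro x hx
      exact (hasDerivAt_G (lt_of_lt_of_le hr0 hx.1)).continuousAt.continuousWithinAt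
    · intro x hx
      rw [interior_Icc] at hx
      exact (hasDerivAt_G (lt_trans hr0 hx.1)).differentiableAt.differentiableWithinAt
    · intro x hx
      rw [interior_Icc] at hx
      have hx0 : (0:ℝ) < x := lt_trans hr0 hx.1
      rw [(hasDerivAt_G hx0).deriv]
      rw [sub_nonneg, div_le_div_iff₀ (by positivity) (by positivity)]
      nlinarith [sq_nonneg (x-1), hx0.le]
  have h1 : Gfun 1 = 0 := by norm_num [Gfun]
  have := hmono (Set.mem_Icc.2 ⟨le_rfl, hr⟩) (Set.mem_Icc.2 ⟨hr, le_rfl⟩) hr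
  linarith [this]

lemma F_nonneg {r : ℝ} (hr : 0 ≤ r) : 0 ≤ Ffun r := by
  have hF1 : Ffun 1 = 0 := by norm_num [Ffun]
  rcases le_or_gt r 1 with h | h
  · -- antitone on [0,1]
    have hanti : AntitoneOn Ffun (Set.Icc 0 1) := by
      apply antitoneOn_of_deriv_nonpos (convex_Icc 0 1)
      · apply ContinuousOn.sub
        · exact ((Real.continuous_mul_log.sub continuous_id).add continuous_const).continuousOn
        · apply ContinuousOn.div (by fun_prop) (by fun_prop)
          intro x hx
          have h0 := hx.1
          have : (0:ℝ) < 2*(x+2) := by linarith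
          exact this.ne' 
      · intro x hx
        rw [interior_Icc] at hx
        exact (hasDerivAt_F hx.1).differentiableAt.differentiableWithinAt
      · intro x hx
        rw [interior_Icc] at hx
        rw [(hasDerivAt_F hx.1).deriv]
        exact G_nonpos hx.1 hx.2.le
    have := hanti (Set.mem_Icc.2 ⟨hr, h⟩) (Set.mem_Icc.2 ⟨zero_le_one, le_rfl⟩) h
    linarith
  · have hmono : MonotoneOn Ffun (Set.Ici 1) := by
      apply monotoneOn_of_deriv_nonneg (convex_Ici 1)
      · intro x hx
        exact (hasDerivAt_F (lt_of_lt_of_le one_pos hx)).continuousAt.continuousWithinAt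
      · intro x hx
        rw [interior_Ici] at hx
        exact (hasDerivAt_F (lt_trans one_pos hx)).differentiableAt.differentiableWithinAt
      · intro x hx
        rw [interior_Ici] at hx
        rw [(hasDerivAt_F (lt_trans one_pos hx)).deriv]
        exact G_nonneg hx.le
    have := hmono (Set.mem_Ici.2 le_rfl) (Set.mem_Ici.2 h.le) h.le
    linarith


lemma F_nonneg' {r : ℝ} (hr : 0 ≤ r) : 0 ≤ r * Real.log r - r + 1 - 3*(r-1)^2/(2*(r+2)) := by
  simpa [Ffun] using F_nonneg hr

lemma phi_pointwise (x y : ℝ) (hx : 0 ≤ x) (hy : 0 ≤ y) (hxy : y = 0 → x = 0) :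
    3*(x-y)^2/(2*(x+2*y)) ≤ x * Real.log (x/y) - x + y := by
  rcases eq_or_lt_of_le hy with hy0 | hy'
  · have hx0 : x = 0 := hxy hy0.symm
    simp [hx0, ← hy0]
  · set r := x / y with hrdef
    have hr0 : 0 ≤ r := by positivity
    have hx' : x = y * r := by rw [hrdef]; field_simp
    have h := F_nonneg' hr0
    have hr2 : (0:ℝ) < r + 2 := by linarith
    rw [hx']
    calc 3*(y*r-y)^2/(2*(y*r+2*y)) = y * (3*(r-1)^2/(2*(r+2))) := by
          have hd : (y*r+2*y) ≠ 0 := by positivity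
          have hd2 : (r+2) ≠ 0 := hr2.ne'
          field_simp
      _ ≤ y * (r*Real.log r - r + 1) := by
          apply mul_le_mul_of_nonneg_left (by linarith) hy'.le
      _ = y*r*Real.log r - y*r + y := by ring

lemma pinsker {α : Type*} [Fintype α] (P Q : α → ℝ) (hP : ∀ a, 0 ≤ P a) (hQ : ∀ a, 0 ≤ Q a)
    (hPs : ∑ a, P a = 1) (hQs : ∑ a, Q a = 1) (habs : ∀ a, Q a = 0 → P a = 0) :
    (∑ a, |P a - Q a|)^2 ≤ 2 * ∑ a, P a * Real.log (P a / Q a) := by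
  set f : α → ℝ := fun a => Real.sqrt (2*(P a + 2*Q a)/3) with hf
  set g : α → ℝ := fun a => Real.sqrt (3*(P a - Q a)^2/(2*(P a + 2*Q a))) with hg
  have hcnn : ∀ a, 0 ≤ P a + 2*Q a := fun a => by nlinarith [hP a, hQ a]
  have key : ∀ a, f a * g a = |P a - Q a| := by
    intro a
    by_cases hc : P a + 2*Q a = 0
    · have hP0 : P a = 0 := by nlinarith [hP a, hQ a]
      have hQ0 : Q a = 0 := by nlinarith [hP a, hQ a]
      simp [hf, hg, hP0, hQ0]
    · have hc' : 0 < P a + 2*Q a := lt_of_le_of_ne (hcnn a) (Ne.symm hc)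
      rw [hf, hg, ← Real.sqrt_mul (by positivity),
        show 2*(P a + 2*Q a)/3 * (3*(P a - Q a)^2/(2*(P a + 2*Q a))) = (P a - Q a)^2 by
          field_simp,
        Real.sqrt_sq_eq_abs]
  have CS := Finset.sum_mul_sq_le_sq_mul_sq Finset.univ f g
  have hf2 : ∑ a, f a^2 = 2 := by
    have h1 : ∀ a ∈ Finset.univ, f a ^ 2 = (2*P a + 4*Q a)/3 := by
      intro a _
      rw [hf, Real.sq_sqrt (by linarith [hcnn a] : (0:ℝ) ≤ 2*(P a + 2*Q a)/3)]
      ring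
    rw [Finset.sum_congr rfl h1, ← Finset.sum_div, Finset.sum_add_distrib,
      ← Finset.mul_sum, ← Finset.mul_sum, hPs, hQs]
    norm_num
  have hg2 : ∑ a, g a^2 ≤ ∑ a, P a * Real.log (P a / Q a) := by
    have h2 : ∑ a, g a^2 ≤ ∑ a, (P a * Real.log (P a / Q a) - P a + Q a) := by
      apply Finset.sum_le_sum
      intro a _
      rw [hg, Real.sq_sqrt (div_nonneg (by positivity) (by linarith [hcnn a]))]
      exact phi_pointwise (P a) (Q a) (hP a) (hQ a) (habs a)
    have h3 : ∑ a, (P a * Real.log (P a / Q a) - P a + Q a)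
        = ∑ a, P a * Real.log (P a / Q a) := by
      rw [Finset.sum_add_distrib, Finset.sum_sub_distrib, hPs, hQs]; ring
    linarith
  calc (∑ a, |P a - Q a|)^2 = (∑ a, f a * g a)^2 := by
        rw [Finset.sum_congr rfl (fun a _ => (key a).symm)]
    _ ≤ (∑ a, f a^2) * (∑ a, g a^2) := CS
    _ ≤ 2 * ∑ a, P a * Real.log (P a / Q a) := by
        rw [hf2]
        apply mul_le_mul_of_nonneg_left hg2 (by norm_num)


lemma entropy_bound {α : Type*} [Fintype α] (q : α → ℝ) (hq : ∀ a, 0 ≤ q a)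
    (hqs : ∑ a, q a = 1) :
    -∑ a, q a * Real.log (q a) ≤ Real.log (Fintype.card α) := by
  have hne : Nonempty α := by
    by_contra h
    rw [not_nonempty_iff] at h
    simp [Finset.univ_eq_empty] at hqs
  have hcard : 0 < (Fintype.card α : ℝ) := by
    have := Fintype.card_pos_iff.2 hne
    exact_mod_cast this
  set n := (Fintype.card α : ℝ) with hn
  have key : ∀ a, -(q a * Real.log (q a)) - q a * Real.log n ≤ 1/n - q a := by
    intro a
    rcases eq_or_lt_of_le (hq a) with h0 | h0
    · rw [← h0]
      simp
      positivity
    · have hlog := Real.log_le_sub_one_of_pos (show (0:ℝ) < 1/(n * q a) by positivity)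
      have h1 : Real.log (1/(n * q a)) = -(Real.log n + Real.log (q a)) := by
        rw [one_div, Real.log_inv, Real.log_mul hcard.ne' h0.ne']
      rw [h1] at hlog
      have h2 := mul_le_mul_of_nonneg_left hlog (hq a)
      have h3 : q a * (1/(n * q a) - 1) = 1/n - q a := by
        field_simp
      nlinarith
  have hsum2 := Finset.sum_le_sum (fun a (_ : a ∈ Finset.univ) => key a)
  rw [Finset.sum_sub_distrib, Finset.sum_sub_distrib, Finset.sum_const, ← Finset.sum_mul,
    hqs, Finset.sum_neg_distrib] at hsum2
  simp only [Finset.card_univ, nsmul_eq_mul, one_mul] at hsum2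
  have h4 : (Fintype.card α : ℝ) * (1/n) = 1 := by
    rw [hn]; field_simp
  linarith


section Aux
set_option linter.unusedSectionVars false
variable {t : ℕ} {p : S × (Fin t → Y) → ℝ}


lemma sum_pi_succ {j : ℕ} (f : (Fin (j+1) → Y) → ℝ) :
    ∑ w, f w = ∑ v : Fin j → Y, ∑ y : Y, f (Fin.snoc v y) := by
  rw [← Equiv.sum_comp (Fin.snocEquiv (fun _ => Y)) f, Fintype.sum_prod_type, Finset.sum_comm]
  rfl

lemma margSPre_nonneg (hpos : ∀ x, 0 ≤ p x) {j : ℕ} (h : j ≤ t) (s : S) (v : Fin j → Y) :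
    0 ≤ margSPre p j h (s, v) := by
  apply Finset.sum_nonneg
  intro w _
  split <;> simp [hpos]

lemma margPre_nonneg (hpos : ∀ x, 0 ≤ p x) {j : ℕ} (h : j ≤ t) (v : Fin j → Y) :
    0 ≤ margPre p j h v :=
  Finset.sum_nonneg fun s _ => margSPre_nonneg hpos h s v

lemma margSPre_snoc {j : ℕ} (h : j + 1 ≤ t) (s : S) (v : Fin j → Y) :
    ∑ y : Y, margSPre p (j+1) h (s, Fin.snoc v y) = margSPre p j (Nat.le_of_succ_le h) (s, v) := by
  unfold margSPre
  rw [Finset.sum_comm]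
  apply Finset.sum_congr rfl
  intro w _
  have hiff : ∀ y : Y, (∀ i : Fin (j+1), w (Fin.castLE h i) = (Fin.snoc v y : Fin (j+1) → Y) i) ↔
      ((∀ i : Fin j, w (Fin.castLE (Nat.le_of_succ_le h) i) = v i) ∧ w ⟨j, h⟩ = y) := by
    intro y
    constructor
    · intro hyp
      refine ⟨fun i => ?_, ?_⟩
      · have := hyp i.castSucc
        simpa [Fin.snoc_castSucc] using this
      · have := hyp (Fin.last j)
        simp [Fin.snoc_last] at this
        exact this
    · rintro ⟨h1, h2⟩ i
      refine Fin.lastCases ?_ ?_ i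
      · simp only [Fin.snoc_last]
        exact h2
      · intro i
        simpa [Fin.snoc_castSucc] using h1 i
  simp_rw [hiff, ite_and]
  by_cases hA : ∀ i : Fin j, w (Fin.castLE (Nat.le_of_succ_le h) i) = v i
  · simp [hA, Finset.sum_ite_eq]
  · simp [hA]

lemma margSPre_le_margPre (hpos : ∀ x, 0 ≤ p x) {j : ℕ} (h : j ≤ t) (s : S) (v : Fin j → Y) :
    margSPre p j h (s, v) ≤ margPre p j h v :=
  Finset.single_le_sum (fun a _ => margSPre_nonneg hpos h a v) (Finset.mem_univ s)

lemma margSPre_succ_le (hpos : ∀ x, 0 ≤ p x) {j : ℕ} (h : j + 1 ≤ t) (s : S)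
    (w : Fin (j+1) → Y) :
    margSPre p (j+1) h (s, w) ≤ margSPre p j (Nat.le_of_succ_le h) (s, Fin.init w) := by
  rw [← margSPre_snoc h s (Fin.init w)]
  have := Finset.single_le_sum
    (f := fun y => margSPre p (j+1) h (s, Fin.snoc (Fin.init w) y))
    (fun y _ => margSPre_nonneg hpos h s _) (Finset.mem_univ (w (Fin.last j)))
  simpa [Fin.snoc_init_self] using this

lemma margPre_snoc {j : ℕ} (h : j + 1 ≤ t) (v : Fin j → Y) :
    ∑ y : Y, margPre p (j+1) h (Fin.snoc v y) = margPre p j (Nat.le_of_succ_le h) v := by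
  unfold margPre
  rw [Finset.sum_comm]
  exact Finset.sum_congr rfl fun s _ => margSPre_snoc h s v

lemma margPre_succ_le (hpos : ∀ x, 0 ≤ p x) {j : ℕ} (h : j + 1 ≤ t) (w : Fin (j+1) → Y) :
    margPre p (j+1) h w ≤ margPre p j (Nat.le_of_succ_le h) (Fin.init w) :=
  Finset.sum_le_sum fun s _ => margSPre_succ_le hpos h s w

lemma sum_margPre (hsum : ∑ x, p x = 1) {j : ℕ} (h : j ≤ t) :
    ∑ v : Fin j → Y, margPre p j h v = 1 := by
  unfold margPre margSPre
  rw [Finset.sum_comm]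
  have key : ∀ s : S, ∀ w : Fin t → Y,
      (∑ v : Fin j → Y, if ∀ i : Fin j, w (Fin.castLE h i) = v i then p (s, w) else 0)
        = p (s, w) := by
    intro s w
    have : ∀ v : Fin j → Y, (∀ i : Fin j, w (Fin.castLE h i) = v i) ↔
        ((fun i => w (Fin.castLE h i)) = v) := fun v => funext_iff.symm
    simp_rw [this]
    simp [Finset.sum_ite_eq]
  calc ∑ s : S, ∑ v : Fin j → Y, ∑ w : Fin t → Y,
        (if ∀ i : Fin j, w (Fin.castLE h i) = v i then p (s, w) else 0)
      = ∑ s : S, ∑ w : Fin t → Y, p (s, w) := by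
        apply Finset.sum_congr rfl
        intro s _
        rw [Finset.sum_comm]
        exact Finset.sum_congr rfl fun w _ => key s w
    _ = 1 := by rw [← Fintype.sum_prod_type]; exact hsum

lemma margPre_zero (hsum : ∑ x, p x = 1) (h : (0:ℕ) ≤ t) (v : Fin 0 → Y) :
    margPre p 0 h v = 1 := by
  have := sum_margPre hsum h
  rwa [Fintype.sum_unique] at this


noncomputable def Lk (p : S × (Fin t → Y) → ℝ) (j : ℕ) (h : j ≤ t) : ℝ :=
  ∑ w : Fin j → Y, ∑ s : S,
    margSPre p j h (s, w) * Real.log (margSPre p j h (s, w) / margPre p j h w)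

lemma Lk_nonpos (hpos : ∀ x, 0 ≤ p x) {j : ℕ} (h : j ≤ t) : Lk p j h ≤ 0 := by
  apply Finset.sum_nonpos
  intro w _
  apply Finset.sum_nonpos
  intro s _
  rcases eq_or_lt_of_le (margSPre_nonneg hpos h s w) with h0 | h0
  · rw [← h0]; simp
  · apply mul_nonpos_of_nonneg_of_nonpos h0.le
    apply Real.log_nonpos
    · exact div_nonneg h0.le (margPre_nonneg hpos h w)
    · rw [div_le_one (lt_of_lt_of_le h0 (margSPre_le_margPre hpos h s w))]
      exact margSPre_le_margPre hpos h s w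

lemma margSPre_zero (h : (0:ℕ) ≤ t) (s : S) (v : Fin 0 → Y) :
    margSPre p 0 h (s, v) = margS p s := by
  unfold margSPre margS
  apply Finset.sum_congr rfl
  intro w _
  rw [if_pos (fun i => i.elim0)]

lemma Lk_zero (hsum : ∑ x, p x = 1) (h : (0:ℕ) ≤ t) :
    Lk p 0 h = ∑ s, margS p s * Real.log (margS p s) := by
  unfold Lk
  rw [Fintype.sum_unique]
  apply Finset.sum_congr rfl
  intro s _
  rw [margSPre_zero h, margPre_zero hsum h, div_one]

lemma kl_step (hpos : ∀ x, 0 ≤ p x) (j : ℕ) (h : j + 1 ≤ t) :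
    (∑ w : Fin (j+1) → Y, ∑ s : S,
      margSPre p (j+1) h (s, w) *
        Real.log (margSPre p (j+1) h (s, w) /
          (margSPre p j (Nat.le_of_succ_le h) (s, Fin.init w) *
            (margPre p (j+1) h w / margPre p j (Nat.le_of_succ_le h) (Fin.init w)))))
    = Lk p (j+1) h - Lk p j (Nat.le_of_succ_le h) := by
  have split : ∀ (w : Fin (j+1) → Y) (s : S),
      margSPre p (j+1) h (s, w) *
        Real.log (margSPre p (j+1) h (s, w) /
          (margSPre p j (Nat.le_of_succ_le h) (s, Fin.init w) *
            (margPre p (j+1) h w / margPre p j (Nat.le_of_succ_le h) (Fin.init w))))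
      = margSPre p (j+1) h (s, w) *
          Real.log (margSPre p (j+1) h (s, w) / margPre p (j+1) h w)
        - margSPre p (j+1) h (s, w) *
          Real.log (margSPre p j (Nat.le_of_succ_le h) (s, Fin.init w) /
            margPre p j (Nat.le_of_succ_le h) (Fin.init w)) := by
    intro w s
    by_cases hP : margSPre p (j+1) h (s, w) = 0
    · simp [hP]
    · have hPpos : 0 < margSPre p (j+1) h (s, w) :=
        (margSPre_nonneg hpos h s w).lt_of_ne (Ne.symm hP)
      have hA : 0 < margSPre p j (Nat.le_of_succ_le h) (s, Fin.init w) :=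
        lt_of_lt_of_le hPpos (margSPre_succ_le hpos h s w)
      have hB1 : 0 < margPre p (j+1) h w :=
        lt_of_lt_of_le hPpos (margSPre_le_margPre hpos h s w)
      have hB0 : 0 < margPre p j (Nat.le_of_succ_le h) (Fin.init w) :=
        lt_of_lt_of_le hB1 (margPre_succ_le hpos h w)
      rw [Real.log_div hP (mul_pos hA (div_pos hB1 hB0)).ne', Real.log_mul hA.ne' (div_pos hB1 hB0).ne',
        Real.log_div hB1.ne' hB0.ne', Real.log_div hP hB1.ne', Real.log_div hA.ne' hB0.ne']
      ring
  rw [Finset.sum_congr rfl (fun w _ => Finset.sum_congr rfl (fun s _ => split w s))]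
  rw [Finset.sum_congr rfl (fun w (_ : w ∈ Finset.univ) => Finset.sum_sub_distrib _ _),
    Finset.sum_sub_distrib]
  congr 1
  rw [sum_pi_succ (f := fun w => ∑ s : S,
    margSPre p (j+1) h (s, w) *
      Real.log (margSPre p j (Nat.le_of_succ_le h) (s, Fin.init w) /
        margPre p j (Nat.le_of_succ_le h) (Fin.init w)))]
  unfold Lk
  apply Finset.sum_congr rfl
  intro v _
  rw [Finset.sum_comm]
  apply Finset.sum_congr rfl
  intro s _
  simp_rw [Fin.init_snoc]
  rw [← Finset.sum_mul, margSPre_snoc h s v]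


end Aux

section Main
set_option linter.unusedSectionVars false
variable {t : ℕ} (p : S × (Fin t → Y) → ℝ)

noncomputable def Pj (j : Fin t) : (Fin (j.1 + 1) → Y) × S → ℝ :=
  fun ws => margSPre p (j.1 + 1) j.isLt (ws.2, ws.1)

noncomputable def Qj (j : Fin t) : (Fin (j.1 + 1) → Y) × S → ℝ :=
  fun ws =>
    margSPre p j.1 (Nat.le_of_succ_le j.isLt) (ws.2, Fin.init ws.1) *
      (margPre p (j.1 + 1) j.isLt ws.1 /
        margPre p j.1 (Nat.le_of_succ_le j.isLt) (Fin.init ws.1))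

variable {p}

lemma Pj_nonneg (hpos : ∀ x, 0 ≤ p x) (j : Fin t) (ws : (Fin (j.1+1) → Y) × S) :
    0 ≤ Pj p j ws := margSPre_nonneg hpos j.isLt ws.2 ws.1

lemma Qj_nonneg (hpos : ∀ x, 0 ≤ p x) (j : Fin t) (ws : (Fin (j.1+1) → Y) × S) :
    0 ≤ Qj p j ws :=
  mul_nonneg (margSPre_nonneg hpos _ ws.2 _)
    (div_nonneg (margPre_nonneg hpos _ _) (margPre_nonneg hpos _ _))

lemma sum_Pj (hsum : ∑ x, p x = 1) (j : Fin t) : ∑ ws, Pj p j ws = 1 := by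
  rw [Fintype.sum_prod_type]
  have h1 : ∀ w : Fin (j.1+1) → Y, (∑ s : S, Pj p j (w, s)) = margPre p (j.1+1) j.isLt w :=
    fun w => rfl
  rw [Finset.sum_congr rfl (fun w _ => h1 w)]
  exact sum_margPre hsum _

lemma sum_Qj (hpos : ∀ x, 0 ≤ p x) (hsum : ∑ x, p x = 1) (j : Fin t) :
    ∑ ws, Qj p j ws = 1 := by
  rw [Fintype.sum_prod_type]
  have key : ∀ w : Fin (j.1+1) → Y, (∑ s : S, Qj p j (w, s)) = margPre p (j.1+1) j.isLt w := by
    intro w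
    by_cases hB0 : margPre p j.1 (Nat.le_of_succ_le j.isLt) (Fin.init w) = 0
    · have hB1 : margPre p (j.1+1) j.isLt w = 0 :=
        le_antisymm (le_trans (margPre_succ_le hpos _ w) hB0.le) (margPre_nonneg hpos _ w)
      have hA : ∀ s, margSPre p j.1 (Nat.le_of_succ_le j.isLt) (s, Fin.init w) = 0 := fun s =>
        le_antisymm (le_trans (margSPre_le_margPre hpos _ s _) hB0.le)
          (margSPre_nonneg hpos _ s _)
      simp [Qj, hA, hB1]
    · unfold Qj
      simp only []
      rw [← Finset.sum_mul]
      have h2 : (∑ s : S, margSPre p j.1 (Nat.le_of_succ_le j.isLt) (s, Fin.init w))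
          = margPre p j.1 (Nat.le_of_succ_le j.isLt) (Fin.init w) := rfl
      rw [h2]
      field_simp
  rw [Finset.sum_congr rfl (fun w _ => key w)]
  exact sum_margPre hsum _

lemma Qj_abs (hpos : ∀ x, 0 ≤ p x) (j : Fin t) (ws : (Fin (j.1+1) → Y) × S) :
    Qj p j ws = 0 → Pj p j ws = 0 := by
  intro h0
  apply le_antisymm _ (Pj_nonneg hpos j ws)
  rcases mul_eq_zero.1 h0 with hA | hdiv
  · exact le_trans (margSPre_succ_le hpos j.isLt ws.2 ws.1) hA.le
  · rcases div_eq_zero_iff.1 hdiv with hB1 | hB0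
    · exact le_trans (margSPre_le_margPre hpos j.isLt ws.2 ws.1) hB1.le
    · exact le_trans (le_trans (margSPre_le_margPre hpos j.isLt ws.2 ws.1)
        (margPre_succ_le hpos j.isLt ws.1)) hB0.le

lemma KLj_eq (hpos : ∀ x, 0 ≤ p x) (j : Fin t) :
    ∑ ws, Pj p j ws * Real.log (Pj p j ws / Qj p j ws)
      = Lk p (j.1+1) j.isLt - Lk p j.1 (Nat.le_of_succ_le j.isLt) := by
  rw [Fintype.sum_prod_type]
  exact kl_step hpos j.1 j.isLt

lemma sum_KL_le {ℓ : ℕ} (hpos : ∀ x, 0 ≤ p x) (hsum : ∑ x, p x = 1)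
    (hcard : Fintype.card S ≤ 2 ^ ℓ) :
    ∑ j : Fin t, (∑ ws, Pj p j ws * Real.log (Pj p j ws / Qj p j ws))
      ≤ (ℓ : ℝ) * Real.log 2 := by
  set Ld : ℕ → ℝ := fun k => if h : k ≤ t then Lk p k h else 0 with hLd
  have h1 : ∀ j : Fin t,
      (∑ ws, Pj p j ws * Real.log (Pj p j ws / Qj p j ws)) = Ld (j.1+1) - Ld j.1 := by
    intro j
    rw [KLj_eq hpos j]
    simp only [hLd]
    rw [dif_pos (show j.1+1 ≤ t from j.isLt), dif_pos (Nat.le_of_succ_le j.isLt)]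
  rw [Finset.sum_congr rfl (fun j _ => h1 j),
    Fin.sum_univ_eq_sum_range (fun k => Ld (k+1) - Ld k) t,
    Finset.sum_range_sub Ld]
  have hLt : Ld t ≤ 0 := by
    simp only [hLd]
    rw [dif_pos (le_refl t)]
    exact Lk_nonpos hpos le_rfl
  have hqs : ∑ s, margS p s = 1 := by
    unfold margS
    rw [← Fintype.sum_prod_type]
    exact hsum
  have hL0 : -Ld 0 ≤ (ℓ : ℝ) * Real.log 2 := by
    simp only [hLd]
    rw [dif_pos (Nat.zero_le t), Lk_zero hsum (Nat.zero_le t)]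
    have hq : ∀ s, 0 ≤ margS p s := fun s => Finset.sum_nonneg fun w _ => hpos _
    have hent := entropy_bound (margS p) hq hqs
    have hSne : 0 < Fintype.card S := by
      rcases Nat.eq_zero_or_pos (Fintype.card S) with h | h
      · exfalso
        have : IsEmpty S := Fintype.card_eq_zero_iff.1 h
        rw [Finset.univ_eq_empty, Finset.sum_empty] at hqs
        norm_num at hqs
      · exact h
    have h2 : Real.log (Fintype.card S) ≤ Real.log ((2:ℝ)^ℓ) := by
      apply Real.log_le_log (by exact_mod_cast hSne)
      exact_mod_cast hcard
    rw [Real.log_pow] at h2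
    push_cast at h2 ⊢
    linarith
  linarith

end Main

/-- **Classical Plug-In Lemma**: for jointly distributed classical variables
`y_1,…,y_t` and a variable `s` over at most `2^ℓ` values depending arbitrarily on them,
and a uniform index `j ← [t]`, the statistical distance between
`(j, y_1,…,y_{j-1}, y_j, s)` and `(j, y_1,…,y_{j-1}, y', s)` is at most `√(ℓ/(2t))`,
where `y'` is a fresh sample from the conditional law of `y_j` given the prefix,
independent of `s` given the prefix. -/
theorem plug_in_lemma {t ℓ : ℕ} (p : S × (Fin t → Y) → ℝ)
    (hpos : ∀ x, 0 ≤ p x) (hsum : ∑ x, p x = 1)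
    (hcard : Fintype.card S ≤ 2 ^ ℓ) (ht : 0 < t) :
    tv (realDist p) (idealDist p) ≤ Real.sqrt ((ℓ : ℝ) / (2 * t)) := by
  classical
  have ht' : (0:ℝ) < (t:ℝ) := by exact_mod_cast ht
  have hlog2 : (0:ℝ) ≤ Real.log 2 := Real.log_nonneg one_le_two
  have hlog2' : Real.log 2 ≤ 1 := by
    have := Real.log_le_sub_one_of_pos (show (0:ℝ) < 2 by norm_num)
    linarith
  set D : Fin t → ℝ := fun j => ∑ ws, |Pj p j ws - Qj p j ws| with hD
  set KL : Fin t → ℝ := fun j => ∑ ws, Pj p j ws * Real.log (Pj p j ws / Qj p j ws) with hKL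
  have hDnn : ∀ j, 0 ≤ D j := fun j => Finset.sum_nonneg fun ws _ => abs_nonneg _
  have hpin : ∀ j, (D j)^2 ≤ 2 * KL j := fun j =>
    pinsker (Pj p j) (Qj p j) (Pj_nonneg hpos j) (Qj_nonneg hpos j)
      (sum_Pj hsum j) (sum_Qj hpos hsum j) (Qj_abs hpos j)
  have hKLnn : ∀ j, 0 ≤ 2 * KL j := fun j => le_trans (sq_nonneg _) (hpin j)
  -- rewrite tv
  have hpoint : ∀ (j : Fin t) (ws : (Fin (j.1+1) → Y) × S),
      realDist p ⟨j, ws⟩ - idealDist p ⟨j, ws⟩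
        = (1/(t:ℝ)) * (Pj p j ws - Qj p j ws) := by
    intro j ws
    show (1/(t:ℝ)) * margSPre p (j.1+1) j.isLt (ws.2, ws.1)
        - (1/(t:ℝ)) * (margSPre p j.1 (Nat.le_of_succ_le j.isLt) (ws.2, Fin.init ws.1) *
            (margPre p (j.1+1) j.isLt ws.1 /
              margPre p j.1 (Nat.le_of_succ_le j.isLt) (Fin.init ws.1)))
      = (1/(t:ℝ)) * (Pj p j ws - Qj p j ws)
    simp only [Pj, Qj]
    ring
  have htv : tv (realDist p) (idealDist p) = (∑ j, D j) / (t:ℝ) / 2 := by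
    unfold tv
    rw [← Finset.univ_sigma_univ, Finset.sum_sigma]
    congr 1
    calc ∑ j : Fin t, ∑ ws, |realDist p ⟨j, ws⟩ - idealDist p ⟨j, ws⟩|
        = ∑ j : Fin t, ∑ ws, (1/(t:ℝ)) * |Pj p j ws - Qj p j ws| := by
          apply Finset.sum_congr rfl
          intro j _
          apply Finset.sum_congr rfl
          intro ws _
          rw [hpoint j ws, abs_mul, abs_of_nonneg (by positivity : (0:ℝ) ≤ 1/(t:ℝ))]
      _ = (∑ j, D j) / (t:ℝ) := by
          rw [Finset.sum_div]
          apply Finset.sum_congr rfl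
          intro j _
          rw [← Finset.mul_sum, hD]
          ring
  rw [htv]
  -- bound on the sum of D's
  have hDj : ∀ j, D j ≤ Real.sqrt (2 * KL j) := by
    intro j
    have h := Real.sqrt_le_sqrt (hpin j)
    rwa [Real.sqrt_sq (hDnn j)] at h
  have hKLsum : ∑ j, 2 * KL j ≤ 2 * ((ℓ:ℝ) * Real.log 2) := by
    rw [← Finset.mul_sum]
    have := sum_KL_le (t := t) (ℓ := ℓ) hpos hsum hcard
    rw [← hKL] at this
    linarith
  have hsumD : ∑ j, D j ≤ Real.sqrt ((t:ℝ) * (2 * ((ℓ:ℝ) * Real.log 2))) := by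
    have h2 : ∑ j, D j ≤ ∑ j, Real.sqrt (2 * KL j) := Finset.sum_le_sum fun j _ => hDj j
    apply le_trans h2
    have hnn : 0 ≤ ∑ j, Real.sqrt (2 * KL j) :=
      Finset.sum_nonneg fun j _ => Real.sqrt_nonneg _
    rw [← Real.sqrt_sq hnn]
    apply Real.sqrt_le_sqrt
    have hCS := Finset.sum_mul_sq_le_sq_mul_sq Finset.univ (fun _ : Fin t => (1:ℝ))
      (fun j => Real.sqrt (2 * KL j))
    simp only [one_mul, one_pow] at hCS
    have h3 : ∑ j, (Real.sqrt (2 * KL j))^2 = ∑ j, 2 * KL j :=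
      Finset.sum_congr rfl fun j _ => Real.sq_sqrt (hKLnn j)
    have h4 : (∑ _j : Fin t, (1:ℝ)) = (t:ℝ) := by simp
    calc (∑ j, Real.sqrt (2 * KL j))^2
        ≤ (∑ _j : Fin t, (1:ℝ)) * ∑ j, (Real.sqrt (2 * KL j))^2 := hCS
      _ = (t:ℝ) * ∑ j, 2 * KL j := by rw [h3, h4]
      _ ≤ (t:ℝ) * (2 * ((ℓ:ℝ) * Real.log 2)) := by
          apply mul_le_mul_of_nonneg_left hKLsum ht'.le
  -- final numeric step
  have hℓnn : (0:ℝ) ≤ (ℓ:ℝ) := Nat.cast_nonneg ℓ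
  have hXnn : (0:ℝ) ≤ (t:ℝ) * (2 * ((ℓ:ℝ) * Real.log 2)) := by positivity
  have hfinal : Real.sqrt ((t:ℝ) * (2 * ((ℓ:ℝ) * Real.log 2))) / (t:ℝ) / 2
      ≤ Real.sqrt ((ℓ:ℝ) / (2 * (t:ℝ))) := by
    rw [Real.le_sqrt (by positivity) (by positivity)]
    rw [div_pow, div_pow, Real.sq_sqrt hXnn]
    rw [div_div, div_le_div_iff₀ (by positivity) (by positivity)]
    nlinarith [sq_nonneg ((t:ℝ)), mul_nonneg (mul_nonneg ht'.le ht'.le) (mul_nonneg hℓnn (sub_nonneg.2 hlog2'))]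
  calc (∑ j, D j) / (t:ℝ) / 2
      ≤ Real.sqrt ((t:ℝ) * (2 * ((ℓ:ℝ) * Real.log 2))) / (t:ℝ) / 2 := by
        gcongr
    _ ≤ Real.sqrt ((ℓ:ℝ) / (2 * (t:ℝ))) := hfinal


end Stmt3
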